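/- Let $0 < \alpha < 1$ and $n \ge 2$. The function $u(x) = \sum_{j=1}^\infty 2^{-j\alpha}\,\mathrm{Re}(x_1+ix_2)^{2^j}$ is harmonic in $\mathbb{B}_n$ and Hölder continuous with exponent $\alpha$ on $\overline{\mathbb{B}_n}$, but is not Hölder continuous with exponent $\beta$ for any $\beta > \alpha$. -/

import Mathlib

open Metric Complex Finset

noncomputable section

/-- The Laplacian `Δ f = ∑ i, ∂²f/∂xᵢ²` on Euclidean space. -/
def lap {n : ℕ} (f : EuclideanSpace ℝ (Fin n) → ℝ) (x : EuclideanSpace ℝ (Fin n)) : ℝ :=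
  ∑ i : Fin n,
    fderiv ℝ (fun y => fderiv ℝ f y (EuclideanSpace.single i 1)) x (EuclideanSpace.single i 1)

/-- `f` is harmonic on `s`: it is `C²` there and its Laplacian vanishes. -/
def IsHarmonicOn {n : ℕ} (f : EuclideanSpace ℝ (Fin n) → ℝ)
    (s : Set (EuclideanSpace ℝ (Fin n))) : Prop :=
  ContDiffOn ℝ 2 f s ∧ ∀ x ∈ s, lap f x = 0

namespace WTHAux

/-- `q α = 2^{-α}`. -/
def q (α : ℝ) : ℝ := (2:ℝ) ^ (-α)

/-- coefficients `a α j = q^{j+1} = 2^{-(j+1)α}`. -/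
def a (α : ℝ) (j : ℕ) : ℝ := q α ^ (j + 1)

lemma q_pos {α : ℝ} : 0 < q α := Real.rpow_pos_of_pos two_pos _

lemma q_lt_one {α : ℝ} (hα : 0 < α) : q α < 1 :=
  Real.rpow_lt_one_of_one_lt_of_neg one_lt_two (neg_neg_of_pos hα)

lemma a_pos {α : ℝ} (j : ℕ) : 0 < a α j := pow_pos q_pos _

lemma a_eq (α : ℝ) (j : ℕ) : (2:ℝ) ^ (-((j:ℝ)+1) * α) = a α j := by
  rw [a, q, ← Real.rpow_natCast ((2:ℝ)^(-α)) (j+1), ← Real.rpow_mul (by norm_num)]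
  push_cast
  ring_nf

lemma summable_a {α : ℝ} (hα : 0 < α) : Summable (a α) := by
  refine ((summable_geometric_of_lt_one q_pos.le (q_lt_one hα)).mul_right (q α)).congr
    fun j => ?_
  rw [a, pow_succ]

/-- the `j`-th term of the lacunary series -/
def term (α : ℝ) (j : ℕ) (z : ℂ) : ℂ := ((a α j : ℝ) : ℂ) * z ^ (2 ^ (j + 1))

/-- the sum -/
def F (α : ℝ) (z : ℂ) : ℂ := ∑' j : ℕ, term α j z

lemma norm_term_le {α : ℝ} (j : ℕ) {z : ℂ} (hz : ‖z‖ ≤ 1) : ‖term α j z‖ ≤ a α j := by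
  rw [term, norm_mul, norm_pow]
  calc ‖((a α j : ℝ) : ℂ)‖ * ‖z‖ ^ (2 ^ (j+1))
      ≤ ‖((a α j : ℝ) : ℂ)‖ * 1 := by
        gcongr
        exact pow_le_one₀ (norm_nonneg z) hz
    _ = a α j := by
        rw [mul_one, Complex.norm_real, Real.norm_eq_abs, abs_of_pos (a_pos j)]

lemma summable_term {α : ℝ} (hα : 0 < α) {z : ℂ} (hz : ‖z‖ ≤ 1) :
    Summable (fun j => term α j z) :=
  Summable.of_norm_bounded (summable_a hα) (fun j => norm_term_le j hz)

lemma pow_sub_pow_norm_le {z w : ℂ} (hz : ‖z‖ ≤ 1) (hw : ‖w‖ ≤ 1) (m : ℕ) :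
    ‖z ^ m - w ^ m‖ ≤ m * ‖z - w‖ := by
  rw [← geom_sum₂_mul, norm_mul]
  have h1 : ‖∑ i ∈ range m, z ^ i * w ^ (m - 1 - i)‖ ≤ m := by
    calc ‖∑ i ∈ range m, z ^ i * w ^ (m - 1 - i)‖
        ≤ ∑ i ∈ range m, ‖z ^ i * w ^ (m - 1 - i)‖ := norm_sum_le _ _
      _ ≤ ∑ _i ∈ range m, 1 := by
          refine Finset.sum_le_sum fun i _ => ?_
          rw [norm_mul, norm_pow, norm_pow]
          exact mul_le_one₀ (pow_le_one₀ (norm_nonneg z) hz)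
            (pow_nonneg (norm_nonneg w) _) (pow_le_one₀ (norm_nonneg w) hw)
      _ = m := by simp
  calc ‖∑ i ∈ range m, z ^ i * w ^ (m - 1 - i)‖ * ‖z - w‖
      ≤ (m : ℝ) * ‖z - w‖ := by gcongr
lemma norm_le_one_of_mem_ball {z : ℂ} (hz : z ∈ ball (0:ℂ) 1) : ‖z‖ ≤ 1 := by
  rw [mem_ball, dist_zero_right] at hz; exact hz.le

lemma F_differentiableOn {α : ℝ} (hα : 0 < α) :
    DifferentiableOn ℂ (F α) (ball (0:ℂ) 1) := by
  refine differentiableOn_tsum_of_summable_norm (summable_a hα)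
    (fun j => ?_) isOpen_ball (fun j w hw => norm_term_le j (norm_le_one_of_mem_ball hw))
  exact ((differentiable_pow _).const_mul _).differentiableOn

lemma F_analytic {α : ℝ} (hα : 0 < α) :
    AnalyticOnNhd ℂ (F α) (ball (0:ℂ) 1) :=
  (F_differentiableOn hα).analyticOnNhd isOpen_ball

lemma derivF_analytic {α : ℝ} (hα : 0 < α) :
    AnalyticOnNhd ℂ (deriv (F α)) (ball (0:ℂ) 1) :=
  (F_analytic hα).deriv
lemma two_mul_q_eq (α : ℝ) : 2 * q α = (2:ℝ) ^ (1 - α) := by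
  rw [q, sub_eq_add_neg, Real.rpow_add two_pos, Real.rpow_one]

lemma one_lt_p {α : ℝ} (hα1 : α < 1) : 1 < 2 * q α := by
  rw [two_mul_q_eq]
  exact Real.one_lt_rpow_iff_of_pos two_pos |>.mpr (Or.inl ⟨one_lt_two, by linarith⟩)

lemma q_pow_eq (α : ℝ) (N : ℕ) : q α ^ N = ((1/2:ℝ)^N) ^ α := by
  have h1 : ((1/2:ℝ))^N = (2:ℝ) ^ (-(N:ℝ)) := by
    rw [Real.rpow_neg two_pos.le, Real.rpow_natCast, one_div, inv_pow]
  rw [h1, q, ← Real.rpow_natCast ((2:ℝ)^(-α)) N, ← Real.rpow_mul two_pos.le,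
    ← Real.rpow_mul two_pos.le]
  ring_nf

lemma qN_le_rpow {α : ℝ} (hα0 : 0 < α) {d : ℝ} {N : ℕ} (hN1 : (1/2:ℝ)^N ≤ d) :
    q α ^ N ≤ d ^ α := by
  rw [q_pow_eq]
  exact Real.rpow_le_rpow (by positivity) hN1 hα0.le

lemma exists_good_N {d : ℝ} (hd : 0 < d) (hd2 : d ≤ 2) :
    ∃ N : ℕ, (1/2:ℝ)^N ≤ d ∧ d * 2^N ≤ 2 := by
  by_cases hd1 : 1 ≤ d
  · exact ⟨0, by simpa using hd1, by simpa using hd2⟩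
  · push_neg at hd1
    have hex : ∃ M : ℕ, (1/2:ℝ)^M < d := exists_pow_lt_of_lt_one hd (by norm_num)
    classical
    set N := Nat.find hex with hNdef
    have hfind : (1/2:ℝ)^N < d := Nat.find_spec hex
    have hNpos : N ≠ 0 := by
      intro h0
      rw [h0] at hfind
      simp at hfind
      linarith
    obtain ⟨K, hK⟩ := Nat.exists_eq_succ_of_ne_zero hNpos
    have hprev : ¬ ((1/2:ℝ)^K < d) := Nat.find_min hex (by omega)
    push_neg at hprev
    refine ⟨N, hfind.le, ?_⟩
    calc d * 2^N ≤ (1/2:ℝ)^K * 2^N := by gcongr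
      _ = 2 := by
          rw [hK, one_div, inv_pow, pow_succ, ← mul_assoc,
            inv_mul_cancel₀ (pow_ne_zero _ two_ne_zero), one_mul]

lemma norm_term_sub {α : ℝ} (j : ℕ) (z w : ℂ) :
    ‖term α j z - term α j w‖ = a α j * ‖z ^ (2^(j+1)) - w ^ (2^(j+1))‖ := by
  rw [term, term, ← mul_sub, norm_mul, Complex.norm_real, Real.norm_eq_abs,
    abs_of_pos (a_pos j)]

lemma holder_bound (α : ℝ) (hα0 : 0 < α) (hα1 : α < 1) :
    ∃ C : ℝ, 0 ≤ C ∧ ∀ z w : ℂ, ‖z‖ ≤ 1 → ‖w‖ ≤ 1 →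
      ‖F α z - F α w‖ ≤ C * ‖z - w‖ ^ α := by
  have hq0 : 0 < q α := q_pos
  have hq1 : q α < 1 := q_lt_one hα0
  have hp1 : 1 < 2 * q α := one_lt_p hα1
  set p : ℝ := 2 * q α with hpdef
  have hpm : 0 < p - 1 := by linarith
  have hqm : 0 < 1 - q α := by linarith
  have hC : 0 ≤ 2 * p / (p - 1) + 2 * q α / (1 - q α) :=
    add_nonneg (div_nonneg (by linarith) hpm.le) (div_nonneg (by linarith) hqm.le)
  refine ⟨2 * p / (p - 1) + 2 * q α / (1 - q α), hC, fun z w hz hw => ?_⟩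
  set d := ‖z - w‖ with hddef
  rcases eq_or_lt_of_le (norm_nonneg (z - w)) with hd0 | hd0
  · have : z = w := by
      rw [← sub_eq_zero]
      exact norm_eq_zero.mp hd0.symm
    rw [this, sub_self, norm_zero]
    exact mul_nonneg hC (Real.rpow_nonneg hd0.le α)
  · have hd2 : d ≤ 2 := by
      calc d ≤ ‖z‖ + ‖w‖ := norm_sub_le z w
        _ ≤ 2 := by linarith
    obtain ⟨N, hN1, hN2⟩ := exists_good_N hd0 hd2
    have hqN : q α ^ N ≤ d ^ α := qN_le_rpow hα0 hN1
    -- summability of the norms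
    have hT : Summable (fun j => ‖term α j z - term α j w‖) := by
      refine Summable.of_nonneg_of_le (fun j => norm_nonneg _) (fun j => ?_)
        ((summable_a hα0).mul_left 2)
      rw [norm_term_sub]
      have := norm_sub_le (z ^ (2^(j+1))) (w ^ (2^(j+1)))
      have h1 : ‖z ^ (2^(j+1)) - w ^ (2^(j+1))‖ ≤ 2 := by
        calc ‖z ^ (2^(j+1)) - w ^ (2^(j+1))‖ ≤ ‖z ^ (2^(j+1))‖ + ‖w ^ (2^(j+1))‖ :=
              norm_sub_le _ _
          _ ≤ 1 + 1 := by
              rw [norm_pow, norm_pow]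
              exact add_le_add (pow_le_one₀ (norm_nonneg z) hz)
                (pow_le_one₀ (norm_nonneg w) hw)
          _ = 2 := by norm_num
      calc a α j * ‖z ^ (2^(j+1)) - w ^ (2^(j+1))‖ ≤ a α j * 2 := by
            exact mul_le_mul_of_nonneg_left h1 (a_pos j).le
        _ = 2 * a α j := by ring
    have hFsub : F α z - F α w = ∑' j, (term α j z - term α j w) :=
      (Summable.tsum_sub (summable_term hα0 hz) (summable_term hα0 hw)).symm
    have hnorm : ‖F α z - F α w‖ ≤ ∑' j, ‖term α j z - term α j w‖ := by
      rw [hFsub]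
      exact norm_tsum_le_tsum_norm hT
    -- split the sum at N
    have hsplit : ∑' j, ‖term α j z - term α j w‖ =
        ∑ j ∈ range N, ‖term α j z - term α j w‖ +
          ∑' j, ‖term α (j + N) z - term α (j + N) w‖ :=
      (Summable.sum_add_tsum_nat_add N hT).symm
    -- part 1
    have hpart1 : ∑ j ∈ range N, ‖term α j z - term α j w‖ ≤ 2 * p / (p - 1) * d ^ α := by
      have h1 : ∀ j ∈ range N, ‖term α j z - term α j w‖ ≤ p ^ (j+1) * d := by
        intro j _
        rw [norm_term_sub]
        calc a α j * ‖z ^ (2^(j+1)) - w ^ (2^(j+1))‖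
            ≤ a α j * ((2^(j+1) : ℕ) * d) :=
              mul_le_mul_of_nonneg_left (pow_sub_pow_norm_le hz hw _) (a_pos j).le
          _ = p ^ (j+1) * d := by
              rw [a, hpdef]
              push_cast
              rw [mul_pow]
              ring
      calc ∑ j ∈ range N, ‖term α j z - term α j w‖
          ≤ ∑ j ∈ range N, p ^ (j+1) * d := Finset.sum_le_sum h1
        _ = (∑ j ∈ range N, p ^ j) * (p * d) := by
            rw [Finset.sum_mul]
            refine Finset.sum_congr rfl fun j _ => ?_
            rw [pow_succ]
            ring
        _ = (p ^ N - 1) / (p - 1) * (p * d) := by rw [geom_sum_eq (by linarith)]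
        _ ≤ p ^ N / (p - 1) * (p * d) := by
            have hpd : 0 ≤ p * d := by positivity
            have h2 : (p ^ N - 1) / (p - 1) ≤ p ^ N / (p - 1) := by
              apply div_le_div_of_nonneg_right ?_ (by linarith)
              · linarith
            exact mul_le_mul_of_nonneg_right h2 hpd
        _ = p / (p - 1) * ((d * 2 ^ N) * q α ^ N) := by
            rw [hpdef, mul_pow]
            ring
        _ ≤ p / (p - 1) * (2 * d ^ α) := by
            have h3 : (d * 2 ^ N) * q α ^ N ≤ 2 * d ^ α := by
              have := mul_le_mul hN2 hqN (by positivity) (by norm_num)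
              linarith
            exact mul_le_mul_of_nonneg_left h3 (div_nonneg (by linarith) hpm.le)
        _ = 2 * p / (p - 1) * d ^ α := by ring
    -- part 2
    have hpart2 : ∑' j, ‖term α (j + N) z - term α (j + N) w‖ ≤
        2 * q α / (1 - q α) * d ^ α := by
      have hs2 : Summable (fun j => 2 * a α (j + N)) :=
        ((summable_nat_add_iff N).mpr (summable_a hα0)).mul_left 2
      have h1 : ∑' j, ‖term α (j + N) z - term α (j + N) w‖ ≤ ∑' j, 2 * a α (j + N) := by
        refine Summable.tsum_le_tsum (fun j => ?_) ((summable_nat_add_iff N).mpr hT) hs2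
        rw [norm_term_sub]
        have h2 : ‖z ^ (2^(j+N+1)) - w ^ (2^(j+N+1))‖ ≤ 2 := by
          calc ‖z ^ (2^(j+N+1)) - w ^ (2^(j+N+1))‖
              ≤ ‖z ^ (2^(j+N+1))‖ + ‖w ^ (2^(j+N+1))‖ := norm_sub_le _ _
            _ ≤ 1 + 1 := by
                rw [norm_pow, norm_pow]
                exact add_le_add (pow_le_one₀ (norm_nonneg z) hz)
                  (pow_le_one₀ (norm_nonneg w) hw)
            _ = 2 := by norm_num
        calc a α (j+N) * ‖z ^ (2^(j+N+1)) - w ^ (2^(j+N+1))‖ ≤ a α (j+N) * 2 :=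
              mul_le_mul_of_nonneg_left h2 (a_pos _).le
          _ = 2 * a α (j+N) := by ring
      have h3 : ∑' j, 2 * a α (j + N) = 2 * q α ^ N * (q α * (1 - q α)⁻¹) := by
        have h4 : ∀ j : ℕ, 2 * a α (j + N) = (2 * q α ^ N * q α) * q α ^ j := by
          intro j
          rw [a]
          ring
        rw [tsum_congr h4, tsum_mul_left, tsum_geometric_of_lt_one hq0.le hq1]
        ring
      calc ∑' j, ‖term α (j + N) z - term α (j + N) w‖
          ≤ 2 * q α ^ N * (q α * (1 - q α)⁻¹) := h1.trans_eq h3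
        _ ≤ 2 * d ^ α * (q α * (1 - q α)⁻¹) := by
            have : 0 ≤ q α * (1 - q α)⁻¹ := mul_nonneg hq0.le (inv_nonneg.mpr hqm.le)
            gcongr
        _ = 2 * q α / (1 - q α) * d ^ α := by
            field_simp
    calc ‖F α z - F α w‖ ≤ ∑' j, ‖term α j z - term α j w‖ := hnorm
      _ = _ := hsplit
      _ ≤ 2 * p / (p - 1) * d ^ α + 2 * q α / (1 - q α) * d ^ α :=
          add_le_add hpart1 hpart2
      _ = (2 * p / (p - 1) + 2 * q α / (1 - q α)) * d ^ α := by ring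
lemma zero_lt_n {n : ℕ} (hn : 2 ≤ n) : 0 < n := by omega

lemma one_lt_n {n : ℕ} (hn : 2 ≤ n) : 1 < n := by omega

/-- the linear map `x ↦ x₀ + x₁ i`. -/
def L (n : ℕ) (hn : 2 ≤ n) : EuclideanSpace ℝ (Fin n) →L[ℝ] ℂ :=
  Complex.ofRealCLM.comp (EuclideanSpace.proj (⟨0, zero_lt_n hn⟩ : Fin n)) +
    (EuclideanSpace.proj (⟨1, one_lt_n hn⟩ : Fin n)).smulRight Complex.I

lemma L_apply {n : ℕ} (hn : 2 ≤ n) (x : EuclideanSpace ℝ (Fin n)) :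
    L n hn x = ((x ⟨0, zero_lt_n hn⟩ : ℝ) : ℂ) + (x ⟨1, one_lt_n hn⟩ : ℝ) * Complex.I := by
  simp [L, Complex.real_smul]

lemma norm_L_le {n : ℕ} (hn : 2 ≤ n) (x : EuclideanSpace ℝ (Fin n)) :
    ‖L n hn x‖ ≤ ‖x‖ := by
  set i0 : Fin n := ⟨0, by omega⟩
  set i1 : Fin n := ⟨1, by omega⟩
  have hne : i0 ≠ i1 := by simp [i0, i1, Fin.ext_iff]
  have h2 : ‖L n hn x‖^2 = (x i0)^2 + (x i1)^2 := by
    rw [L_apply, Complex.sq_norm, Complex.normSq_add_mul_I]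
  have h3 : ‖x‖^2 = ∑ i, ‖x i‖^2 := by
    rw [EuclideanSpace.norm_eq, Real.sq_sqrt]
    positivity
  have h4 : ‖L n hn x‖^2 ≤ ‖x‖^2 := by
    rw [h2, h3]
    calc (x i0)^2 + (x i1)^2 = ∑ i ∈ ({i0, i1} : Finset (Fin n)), ‖x i‖^2 := by
          rw [Finset.sum_pair hne]
          simp [sq_abs]
      _ ≤ ∑ i, ‖x i‖^2 := by
          refine Finset.sum_le_sum_of_subset_of_nonneg (Finset.subset_univ _) ?_
          intro i _ _
          positivity
  calc ‖L n hn x‖ = Real.sqrt (‖L n hn x‖^2) := (Real.sqrt_sq (norm_nonneg _)).symm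
    _ ≤ Real.sqrt (‖x‖^2) := Real.sqrt_le_sqrt h4
    _ = ‖x‖ := Real.sqrt_sq (norm_nonneg _)

/-- derivative of `y ↦ (g (L y)).re` -/
lemma hasFDerivAt_re_comp {n : ℕ} (hn : 2 ≤ n) (g : ℂ → ℂ)
    (x : EuclideanSpace ℝ (Fin n)) (hg : DifferentiableAt ℂ g (L n hn x)) :
    HasFDerivAt (fun y => (g (L n hn y)).re)
      (Complex.reCLM.comp
        ((((1 : ℂ →L[ℂ] ℂ).smulRight (deriv g (L n hn x))).restrictScalars ℝ).comp
          (L n hn))) x := by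
  have h1 : HasFDerivAt g ((1 : ℂ →L[ℂ] ℂ).smulRight (deriv g (L n hn x))) (L n hn x) :=
    hasDerivAt_iff_hasFDerivAt.mp hg.hasDerivAt
  exact Complex.reCLM.hasFDerivAt.comp x ((h1.restrictScalars ℝ).comp x ((L n hn).hasFDerivAt))

lemma fderiv_re_comp_apply {n : ℕ} (hn : 2 ≤ n) (g : ℂ → ℂ)
    (x : EuclideanSpace ℝ (Fin n)) (hg : DifferentiableAt ℂ g (L n hn x))
    (v : EuclideanSpace ℝ (Fin n)) :
    fderiv ℝ (fun y => (g (L n hn y)).re) x v = (L n hn v * deriv g (L n hn x)).re := by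
  rw [(hasFDerivAt_re_comp hn g x hg).fderiv]
  simp [smul_eq_mul]

end WTHAux

open WTHAux in
/-- **The function `u x = ∑_{j≥1} 2^{-jα} Re (x₁ + i x₂) ^ (2^j)` is harmonic in the unit
ball, `α`-Hölder on the closed unit ball, but not `β`-Hölder for any `β > α`.** -/
theorem weierstrass_type_harmonic_exactly_alpha_holder (n : ℕ) (hn : 2 ≤ n)
    (α : ℝ) (hα0 : 0 < α) (hα1 : α < 1)
    (u : EuclideanSpace ℝ (Fin n) → ℝ)
    (hu : ∀ x, u x = ∑' j : ℕ, (2 : ℝ) ^ (-((j : ℝ) + 1) * α) *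
        ((((x ⟨0, by omega⟩ : ℝ) : ℂ) + (x ⟨1, by omega⟩ : ℝ) * Complex.I) ^ (2 ^ (j + 1)) |>.re)) :
    IsHarmonicOn u (ball 0 1) ∧
    (∃ C : ℝ, ∀ x ∈ closedBall (0 : EuclideanSpace ℝ (Fin n)) 1,
        ∀ y ∈ closedBall (0 : EuclideanSpace ℝ (Fin n)) 1,
          |u x - u y| ≤ C * ‖x - y‖ ^ α) ∧
    (∀ β : ℝ, α < β →
      ¬ ∃ C : ℝ, ∀ x ∈ closedBall (0 : EuclideanSpace ℝ (Fin n)) 1,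
          ∀ y ∈ closedBall (0 : EuclideanSpace ℝ (Fin n)) 1,
            |u x - u y| ≤ C * ‖x - y‖ ^ β) := by
  classical
  have hnormL : ∀ x : EuclideanSpace ℝ (Fin n), ‖x‖ ≤ 1 → ‖WTHAux.L n hn x‖ ≤ 1 :=
    fun x h => (WTHAux.norm_L_le hn x).trans h
  have hue : ∀ x : EuclideanSpace ℝ (Fin n), ‖x‖ ≤ 1 →
      u x = (WTHAux.F α (WTHAux.L n hn x)).re := by
    intro x hx
    rw [hu x, WTHAux.F, Complex.re_tsum (WTHAux.summable_term hα0 (hnormL x hx))]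
    refine tsum_congr fun j => ?_
    rw [WTHAux.term, Complex.re_ofReal_mul, WTHAux.a_eq α j, WTHAux.L_apply hn x]
  refine ⟨⟨?_, ?_⟩, ?_, ?_⟩
  · -- C² smoothness
    have h1 : ContDiffOn ℂ 2 (WTHAux.F α) (ball (0:ℂ) 1) :=
      (WTHAux.F_analytic hα0).contDiffOn isOpen_ball.uniqueDiffOn
    have h2 : ContDiffOn ℝ 2 (WTHAux.F α) (ball (0:ℂ) 1) :=
      ContDiffOn.restrict_scalars ℝ h1
    have hmaps : Set.MapsTo (WTHAux.L n hn) (ball (0:EuclideanSpace ℝ (Fin n)) 1)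
        (ball (0:ℂ) 1) := by
      intro y hy
      rw [mem_ball_zero_iff] at hy ⊢
      exact lt_of_le_of_lt (WTHAux.norm_L_le hn y) hy
    have h3 : ContDiffOn ℝ 2 (fun y => WTHAux.F α (WTHAux.L n hn y))
        (ball (0:EuclideanSpace ℝ (Fin n)) 1) :=
      h2.comp ((WTHAux.L n hn).contDiff.contDiffOn) hmaps
    have h4 : ContDiffOn ℝ 2 (fun y => (WTHAux.F α (WTHAux.L n hn y)).re)
        (ball (0:EuclideanSpace ℝ (Fin n)) 1) :=
      Complex.reCLM.contDiff.comp_contDiffOn h3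
    exact h4.congr fun y hy => hue y (mem_ball_zero_iff.mp hy).le
  · -- Laplacian vanishes
    intro x hx
    have hxn : ‖x‖ < 1 := mem_ball_zero_iff.mp hx
    have hzball : WTHAux.L n hn x ∈ ball (0:ℂ) 1 :=
      mem_ball_zero_iff.mpr (lt_of_le_of_lt (WTHAux.norm_L_le hn x) hxn)
    have hF'd : DifferentiableAt ℂ (deriv (WTHAux.F α)) (WTHAux.L n hn x) :=
      ((WTHAux.derivF_analytic hα0) _ hzball).differentiableAt
    have h1 : ∀ y ∈ ball (0:EuclideanSpace ℝ (Fin n)) 1, ∀ v,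
        fderiv ℝ u y v = (WTHAux.L n hn v * deriv (WTHAux.F α) (WTHAux.L n hn y)).re := by
      intro y hy v
      have heq : u =ᶠ[nhds y] (fun y' => (WTHAux.F α (WTHAux.L n hn y')).re) := by
        filter_upwards [isOpen_ball.mem_nhds hy] with y' hy'
        exact hue y' (mem_ball_zero_iff.mp hy').le
      rw [heq.fderiv_eq]
      exact WTHAux.fderiv_re_comp_apply hn _ y
        ((WTHAux.F_analytic hα0 _ (mem_ball_zero_iff.mpr
          (lt_of_le_of_lt (WTHAux.norm_L_le hn y) (mem_ball_zero_iff.mp hy)))).differentiableAt) v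
    set W : ℂ := deriv (deriv (WTHAux.F α)) (WTHAux.L n hn x) with hW
    set c : Fin n → ℂ := fun i => WTHAux.L n hn (EuclideanSpace.single i 1) with hc
    have hGi : ∀ i : Fin n,
        fderiv ℝ (fun y => fderiv ℝ u y (EuclideanSpace.single i 1)) x
          (EuclideanSpace.single i 1) = (c i * (c i * W)).re := by
      intro i
      have hgeq : (fun y => fderiv ℝ u y (EuclideanSpace.single i 1)) =ᶠ[nhds x]
          (fun y => ((fun zz => c i * deriv (WTHAux.F α) zz) (WTHAux.L n hn y)).re) := by
        filter_upwards [isOpen_ball.mem_nhds hx] with y hy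
        exact h1 y hy (EuclideanSpace.single i 1)
      rw [hgeq.fderiv_eq, WTHAux.fderiv_re_comp_apply hn _ x (hF'd.const_mul (c i)),
        deriv_const_mul (c i) hF'd]
    unfold lap
    have hcsq : ∑ i : Fin n, (c i)^2 = 0 := by
      have hval : ∀ i : Fin n, (c i)^2 =
          (if i = (⟨0, by omega⟩ : Fin n) then (1:ℂ) else 0) +
            (if i = (⟨1, by omega⟩ : Fin n) then (-1:ℂ) else 0) := by
        intro i
        have hci : c i = (((EuclideanSpace.single i (1:ℝ)) ⟨0, by omega⟩ : ℝ) : ℂ) +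
            ((EuclideanSpace.single i (1:ℝ)) ⟨1, by omega⟩ : ℝ) * Complex.I :=
          WTHAux.L_apply hn _
        by_cases h0 : i = (⟨0, by omega⟩ : Fin n)
        · subst h0
          rw [hci]
          simp [EuclideanSpace.single_apply, Fin.ext_iff]
        · by_cases h1 : i = (⟨1, by omega⟩ : Fin n)
          · subst h1
            rw [hci]
            simp [EuclideanSpace.single_apply, Fin.ext_iff, Complex.I_sq]
          · rw [hci]
            simp only [EuclideanSpace.single_apply]
            rw [if_neg (fun h => h0 (by simpa using h.symm)),
              if_neg (fun h => h1 (by simpa using h.symm)),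
              if_neg h0, if_neg h1]
            norm_num
      rw [Finset.sum_congr rfl fun i _ => hval i, Finset.sum_add_distrib,
        Finset.sum_ite_eq' Finset.univ _ (fun _ => (1:ℂ)),
        Finset.sum_ite_eq' Finset.univ _ (fun _ => (-1:ℂ))]
      simp
    calc ∑ i : Fin n, fderiv ℝ (fun y => fderiv ℝ u y (EuclideanSpace.single i 1)) x
          (EuclideanSpace.single i 1)
        = ∑ i : Fin n, (c i * (c i * W)).re := Finset.sum_congr rfl fun i _ => hGi i
      _ = ((∑ i : Fin n, (c i)^2) * W).re := by
          rw [← Complex.re_sum, Finset.sum_mul]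
          congr 1
          exact Finset.sum_congr rfl fun i _ => by ring
      _ = 0 := by rw [hcsq, zero_mul, Complex.zero_re]
  · -- Hölder with exponent α
    obtain ⟨C, hC0, hCb⟩ := WTHAux.holder_bound α hα0 hα1
    refine ⟨C, fun x hx y hy => ?_⟩
    rw [mem_closedBall, dist_zero_right] at hx hy
    rw [hue x hx, hue y hy]
    have h1 : |(WTHAux.F α (WTHAux.L n hn x)).re - (WTHAux.F α (WTHAux.L n hn y)).re|
        ≤ ‖WTHAux.F α (WTHAux.L n hn x) - WTHAux.F α (WTHAux.L n hn y)‖ := by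
      rw [← Complex.sub_re]
      exact Complex.abs_re_le_norm _
    have h2 : ‖WTHAux.L n hn x - WTHAux.L n hn y‖ ≤ ‖x - y‖ := by
      rw [← map_sub]
      exact WTHAux.norm_L_le hn _
    calc |(WTHAux.F α (WTHAux.L n hn x)).re - (WTHAux.F α (WTHAux.L n hn y)).re|
        ≤ ‖WTHAux.F α (WTHAux.L n hn x) - WTHAux.F α (WTHAux.L n hn y)‖ := h1
      _ ≤ C * ‖WTHAux.L n hn x - WTHAux.L n hn y‖ ^ α := hCb _ _ (hnormL x hx) (hnormL y hy)
      _ ≤ C * ‖x - y‖ ^ α :=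
          mul_le_mul_of_nonneg_left (Real.rpow_le_rpow (norm_nonneg _) h2 hα0.le) hC0
  · -- not β-Hölder
    intro β hβ
    rintro ⟨C, hC⟩
    have hx0mem : EuclideanSpace.single (⟨0, by omega⟩ : Fin n) (1:ℝ) ∈
        closedBall (0:EuclideanSpace ℝ (Fin n)) 1 := by
      rw [mem_closedBall, dist_zero_right, EuclideanSpace.norm_single]
      norm_num
    have hur : ∀ r : ℝ, u (EuclideanSpace.single (⟨0, by omega⟩ : Fin n) r) =
        ∑' j, WTHAux.a α j * r ^ (2^(j+1)) := by
      intro r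
      rw [hu]
      refine tsum_congr fun j => ?_
      rw [WTHAux.a_eq α j]
      congr 1
      have e0 : (EuclideanSpace.single (⟨0, by omega⟩ : Fin n) r) ⟨0, by omega⟩ = r := by
        simp [EuclideanSpace.single_apply]
      have e1 : (EuclideanSpace.single (⟨0, by omega⟩ : Fin n) r) ⟨1, by omega⟩ = 0 := by
        simp [EuclideanSpace.single_apply, Fin.ext_iff]
      rw [e0, e1]
      norm_num
      rw [← Complex.ofReal_pow, Complex.ofReal_re]
    have hsummable : ∀ r : ℝ, 0 ≤ r → r ≤ 1 →
        Summable (fun j => WTHAux.a α j * r ^ (2^(j+1))) := by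
      intro r h0 h1
      refine Summable.of_nonneg_of_le
        (fun j => mul_nonneg (WTHAux.a_pos j).le (pow_nonneg h0 _)) (fun j => ?_)
        (WTHAux.summable_a hα0)
      exact mul_le_of_le_one_right (WTHAux.a_pos j).le (pow_le_one₀ h0 h1)
    have key : ∀ m : ℕ, WTHAux.q α ^ (m+1) ≤ 2 * C * WTHAux.q β ^ (m+1) := by
      intro m
      set ε : ℝ := (1/2:ℝ)^(m+1) with hε
      have hε0 : 0 < ε := by positivity
      have hε1 : ε ≤ 1 := pow_le_one₀ (by norm_num) (by norm_num)
      set r : ℝ := 1 - ε with hr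
      have hr0 : 0 ≤ r := by rw [hr]; linarith
      have hr1 : r ≤ 1 := by rw [hr]; linarith
      have hymem : EuclideanSpace.single (⟨0, by omega⟩ : Fin n) r ∈
          closedBall (0:EuclideanSpace ℝ (Fin n)) 1 := by
        rw [mem_closedBall, dist_zero_right, EuclideanSpace.norm_single,
          Real.norm_eq_abs, _root_.abs_of_nonneg hr0]
        exact hr1
      have hdiffnorm : ‖EuclideanSpace.single (⟨0, by omega⟩ : Fin n) (1:ℝ) -
          EuclideanSpace.single (⟨0, by omega⟩ : Fin n) r‖ = ε := by
        have hsing : EuclideanSpace.single (⟨0, by omega⟩ : Fin n) (1:ℝ) -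
            EuclideanSpace.single (⟨0, by omega⟩ : Fin n) r =
            EuclideanSpace.single (⟨0, by omega⟩ : Fin n) ε := by
          ext j
          by_cases hj : j = (⟨0, by omega⟩ : Fin n)
          · simp [EuclideanSpace.single_apply, hj, hr]
          · simp [EuclideanSpace.single_apply, hj]
        rw [hsing, EuclideanSpace.norm_single, Real.norm_eq_abs, _root_.abs_of_pos hε0]
      have hpowle : r ^ (2^(m+1)) ≤ 1/2 := by
        have h1 : r ≤ Real.exp (-ε) := by
          have := Real.add_one_le_exp (-ε)
          rw [hr]; linarith
        have h2 : r ^ (2^(m+1)) ≤ Real.exp (-ε) ^ (2^(m+1)) := pow_le_pow_left₀ hr0 h1 _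
        have h3 : Real.exp (-ε) ^ (2^(m+1)) = Real.exp (((2^(m+1) : ℕ) : ℝ) * (-ε)) := by
          rw [Real.exp_nat_mul]
        have h4 : ((2^(m+1) : ℕ) : ℝ) * (-ε) = -1 := by
          rw [hε]
          push_cast
          rw [mul_neg, ← mul_pow]
          norm_num
        have h5 : Real.exp (-1) ≤ 1/2 := by
          rw [Real.exp_neg]
          have h6 : 2 ≤ Real.exp 1 := by
            have := Real.add_one_le_exp 1; linarith
          calc (Real.exp 1)⁻¹ ≤ 2⁻¹ := by
                apply inv_anti₀ two_pos h6
            _ = 1/2 := by norm_num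
        calc r ^ (2^(m+1)) ≤ Real.exp (-ε) ^ (2^(m+1)) := h2
          _ = Real.exp (((2^(m+1) : ℕ) : ℝ) * (-ε)) := h3
          _ = Real.exp (-1) := by rw [h4]
          _ ≤ 1/2 := h5
      have hs1 := hsummable 1 zero_le_one le_rfl
      have hsr := hsummable r hr0 hr1
      have hDsum : Summable (fun j => WTHAux.a α j * (1 - r^(2^(j+1)))) := by
        refine (hs1.sub hsr).congr fun j => ?_
        rw [one_pow]; ring
      have h7 : ∑' j, WTHAux.a α j * (1 - r^(2^(j+1))) =
          (∑' j, WTHAux.a α j * (1:ℝ)^(2^(j+1))) - ∑' j, WTHAux.a α j * r^(2^(j+1)) := by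
        rw [← Summable.tsum_sub hs1 hsr]
        exact tsum_congr fun j => by rw [one_pow]; ring
      have hlow : WTHAux.a α m * (1/2) ≤
          u (EuclideanSpace.single (⟨0, by omega⟩ : Fin n) (1:ℝ)) -
            u (EuclideanSpace.single (⟨0, by omega⟩ : Fin n) r) := by
        rw [hur 1, hur r, ← h7]
        calc WTHAux.a α m * (1/2) ≤ WTHAux.a α m * (1 - r^(2^(m+1))) := by
              refine mul_le_mul_of_nonneg_left ?_ (WTHAux.a_pos m).le
              linarith
          _ ≤ ∑' j, WTHAux.a α j * (1 - r^(2^(j+1))) := by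
              refine Summable.le_tsum hDsum m fun j _ => ?_
              exact mul_nonneg (WTHAux.a_pos j).le
                (sub_nonneg.mpr (pow_le_one₀ hr0 hr1))
      have h8 := hC _ hx0mem _ hymem
      rw [hdiffnorm] at h8
      have h9 : WTHAux.a α m * (1/2) ≤ C * ε ^ β := by
        calc WTHAux.a α m * (1/2) ≤ _ := hlow
          _ ≤ |u (EuclideanSpace.single (⟨0, by omega⟩ : Fin n) (1:ℝ)) -
              u (EuclideanSpace.single (⟨0, by omega⟩ : Fin n) r)| := le_abs_self _
          _ ≤ C * ε ^ β := h8
      have hεβ : ε ^ β = WTHAux.q β ^ (m+1) := (WTHAux.q_pow_eq β (m+1)).symm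
      have h10 : WTHAux.a α m = WTHAux.q α ^ (m+1) := rfl
      rw [hεβ] at h9
      rw [← h10]
      linarith
    have hq0β : 0 < WTHAux.q β := WTHAux.q_pos
    have hB1 : 1 < (2:ℝ)^(β - α) :=
      Real.one_lt_rpow_iff_of_pos two_pos |>.mpr (Or.inl ⟨one_lt_two, by linarith⟩)
    have hqq : WTHAux.q α = (2:ℝ)^(β - α) * WTHAux.q β := by
      rw [WTHAux.q, WTHAux.q, ← Real.rpow_add two_pos]
      congr 1
      ring
    have key2 : ∀ m : ℕ, ((2:ℝ)^(β - α)) ^ (m+1) ≤ 2 * C := by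
      intro m
      have h9 := key m
      rw [hqq, mul_pow] at h9
      exact le_of_mul_le_mul_right h9 (pow_pos hq0β (m+1))
    obtain ⟨M, hM⟩ := pow_unbounded_of_one_lt (2*C) hB1
    have h10 : ((2:ℝ)^(β - α)) ^ M ≤ ((2:ℝ)^(β - α)) ^ (M+1) :=
      pow_le_pow_right₀ hB1.le (by omega)
    linarith [key2 M]
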